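/- For w' = x' + iy' ∈ ℍ lying on the Euclidean half-circle through i with center α ∈ ℝ and radius δ = √(1 + α²) (so that y' = √(1 − x'² + 2αx')), the quantity (|w' + i| + |w' − i|)/(|w' + i| − |w' − i|) equals (x'² + y'² + 1 + √((x'² + y'² + 1)² − 4y'²))/(2y'), and this equals (1 + αx' + δ|x'|)/y'. Consequently e^{d(i, w')} = (1 + αx' + δ|x'|)/y', where d is the hyperbolic distance on ℍ. -/

import Mathlib

set_option maxHeartbeats 1000000

noncomputable section

open UpperHalfPlane Complex Real

/-- For `w' = x' + iy' ∈ ℍ` on the Euclidean half-circle through `i`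
with center `α ∈ ℝ` and radius `δ = √(1 + α²)`, one has `y' = √(1 − x'² + 2αx')`,
`(|w' + i| + |w' − i|)/(|w' + i| − |w' − i|)
  = (x'² + y'² + 1 + √((x'² + y'² + 1)² − 4y'²))/(2y') = (1 + αx' + δ|x'|)/y'`,
and consequently `e^{d(i, w')} = (1 + αx' + δ|x'|)/y'`. -/
theorem exp_dist_I_of_mem_halfCircle (α : ℝ) (w' : ℍ)
    (hcirc : (w'.re - α) ^ 2 + w'.im ^ 2 = 1 + α ^ 2) :
    w'.im = Real.sqrt (1 - w'.re ^ 2 + 2 * α * w'.re) ∧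
    (‖(w' : ℂ) + Complex.I‖ + ‖(w' : ℂ) - Complex.I‖) /
        (‖(w' : ℂ) + Complex.I‖ - ‖(w' : ℂ) - Complex.I‖) =
      (w'.re ^ 2 + w'.im ^ 2 + 1 +
          Real.sqrt ((w'.re ^ 2 + w'.im ^ 2 + 1) ^ 2 - 4 * w'.im ^ 2)) / (2 * w'.im) ∧
    (w'.re ^ 2 + w'.im ^ 2 + 1 +
          Real.sqrt ((w'.re ^ 2 + w'.im ^ 2 + 1) ^ 2 - 4 * w'.im ^ 2)) / (2 * w'.im) =
      (1 + α * w'.re + Real.sqrt (1 + α ^ 2) * |w'.re|) / w'.im ∧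
    Real.exp (dist UpperHalfPlane.I w') =
      (1 + α * w'.re + Real.sqrt (1 + α ^ 2) * |w'.re|) / w'.im := by
  set x := w'.re with hx
  set y := w'.im with hy
  have hy0 : 0 < y := w'.im_pos
  have hxy : x ^ 2 + y ^ 2 = 1 + 2 * α * x := by nlinarith [hcirc]
  set a := ‖(w' : ℂ) + Complex.I‖ with ha
  set b := ‖(w' : ℂ) - Complex.I‖ with hb
  have ha0 : 0 ≤ a := norm_nonneg _
  have hb0 : 0 ≤ b := norm_nonneg _
  have ha2 : a ^ 2 = x ^ 2 + y ^ 2 + 1 + 2 * y := by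
    rw [ha, Complex.sq_norm, Complex.normSq_apply]
    simp [UpperHalfPlane.coe_re, UpperHalfPlane.coe_im, ← hx, ← hy]
    ring
  have hb2 : b ^ 2 = x ^ 2 + y ^ 2 + 1 - 2 * y := by
    rw [hb, Complex.sq_norm, Complex.normSq_apply]
    simp [UpperHalfPlane.coe_re, UpperHalfPlane.coe_im, ← hx, ← hy]
    ring
  have hab : b < a := by
    have : b ^ 2 < a ^ 2 := by rw [ha2, hb2]; linarith
    nlinarith
  have hsq : Real.sqrt ((x ^ 2 + y ^ 2 + 1) ^ 2 - 4 * y ^ 2) = a * b := by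
    have : (x ^ 2 + y ^ 2 + 1) ^ 2 - 4 * y ^ 2 = (a * b) ^ 2 := by
      rw [mul_pow, ha2, hb2]; ring
    rw [this, Real.sqrt_sq (by positivity)]
  have haux : (a - b) * (a + b) = 4 * y := by nlinarith [ha2, hb2]
  refine ⟨?_, ?_, ?_, ?_⟩
  · rw [show 1 - x ^ 2 + 2 * α * x = y ^ 2 by linarith, Real.sqrt_sq hy0.le]
  · rw [hsq, div_eq_div_iff (by linarith) (by positivity)]
    nlinarith [ha2, hb2]
  · rw [hsq]
    have hS : x ^ 2 + y ^ 2 + 1 = 2 * (1 + α * x) := by linarith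
    have hab2 : a * b = 2 * (Real.sqrt (1 + α ^ 2) * |x|) := by
      have h1 : (a * b) ^ 2 = (2 * (Real.sqrt (1 + α ^ 2) * |x|)) ^ 2 := by
        have := Real.sq_sqrt (show (0:ℝ) ≤ 1 + α ^ 2 by positivity)
        rw [mul_pow, ha2, hb2, mul_pow, mul_pow, this, _root_.sq_abs]
        nlinarith [hxy]
      have h2 : 0 ≤ 2 * (Real.sqrt (1 + α ^ 2) * |x|) := by positivity
      nlinarith [mul_nonneg ha0 hb0]
    rw [hS, hab2]
    field_simp
  · -- exp dist
    have hd : dist UpperHalfPlane.I w' =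
        2 * Real.arsinh (b / (2 * Real.sqrt y)) := by
      rw [UpperHalfPlane.dist_eq]
      congr 1
      have h1 : (UpperHalfPlane.I : ℂ) = Complex.I := rfl
      have h2 : (UpperHalfPlane.I).im = 1 := rfl
      rw [h2, one_mul, ← hy]
      congr 1
      rw [h1, Complex.dist_eq, hb, norm_sub_rev]
    have hsy : Real.sqrt y > 0 := Real.sqrt_pos.2 hy0
    have hsy2 : Real.sqrt y ^ 2 = y := Real.sq_sqrt hy0.le
    have hroot : Real.sqrt (1 + (b / (2 * Real.sqrt y)) ^ 2) = a / (2 * Real.sqrt y) := by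
      have h4 : (2 * Real.sqrt y) ^ 2 = 4 * y := by rw [mul_pow, hsy2]; ring
      have h3 : 1 + (b / (2 * Real.sqrt y)) ^ 2 = (a / (2 * Real.sqrt y)) ^ 2 := by
        rw [div_pow, div_pow, h4, ha2, hb2]
        field_simp
        ring
      rw [h3, Real.sqrt_sq (by positivity)]
    have key : Real.exp (dist UpperHalfPlane.I w') = (a + b) / (a - b) := by
      rw [hd, two_mul, Real.exp_add, Real.exp_arsinh, hroot]
      rw [← add_div]
      rw [div_mul_div_comm, ← sq]
      rw [div_eq_div_iff (by positivity) (by linarith)]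
      nlinarith [haux, hsy2]
    rw [key]
    -- chain: (a+b)/(a-b) = (S + ab)/(2y) = (1+αx+δ|x|)/y
    have e1 : (a + b) / (a - b) =
        (x ^ 2 + y ^ 2 + 1 + Real.sqrt ((x ^ 2 + y ^ 2 + 1) ^ 2 - 4 * y ^ 2)) / (2 * y) := by
      rw [hsq, div_eq_div_iff (by linarith) (by positivity)]
      nlinarith [ha2, hb2]
    rw [e1]
    rw [hsq]
    have hS : x ^ 2 + y ^ 2 + 1 = 2 * (1 + α * x) := by linarith
    have hab2 : a * b = 2 * (Real.sqrt (1 + α ^ 2) * |x|) := by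
      have h1 : (a * b) ^ 2 = (2 * (Real.sqrt (1 + α ^ 2) * |x|)) ^ 2 := by
        have := Real.sq_sqrt (show (0:ℝ) ≤ 1 + α ^ 2 by positivity)
        rw [mul_pow, ha2, hb2, mul_pow, mul_pow, this, _root_.sq_abs]
        nlinarith [hxy]
      have h2 : 0 ≤ 2 * (Real.sqrt (1 + α ^ 2) * |x|) := by positivity
      nlinarith [mul_nonneg ha0 hb0]
    rw [hS, hab2]
    field_simp
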